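/- Let A and B be disjoint finite sets of points in the plane such that A ∪ B is not contained in a single line. Let T be a (non-degenerate) triangle with vertices a ∈ A, b ∈ B and c ∈ A ∪ B. Then a or b has a neighbour in the bivisibility graph B(A,B) lying in the closed triangle T but not on the segment ab. -/

import Mathlib

/-- Adjacency in the bivisibility graph: one point from `A` and one from `B`, mutually
visible with respect to `A ∪ B` (no point of `A ∪ B` in the open segment between them). -/
def BivisAdj (A B : Finset (ℝ × ℝ)) (x y : ℝ × ℝ) : Prop :=
  x ≠ y ∧ ((x ∈ A ∧ y ∈ B) ∨ (x ∈ B ∧ y ∈ A)) ∧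
    ∀ p ∈ A ∪ B, p ∉ openSegment ℝ x y

/-- The bivisibility graph `B(A,B)` of two finite point sets in the plane. -/
def bivisibilityGraph (A B : Finset (ℝ × ℝ)) : SimpleGraph {p : ℝ × ℝ // p ∈ A ∪ B} where
  Adj u v := BivisAdj A B u.1 v.1
  symm := by
    constructor
    rintro u v ⟨hne, hab, h⟩
    refine ⟨hne.symm, by tauto, fun p hp => ?_⟩
    rw [openSegment_symm]
    exact h p hp
  loopless := by constructor; rintro u ⟨hne, -⟩; exact hne rfl

private lemma cross_eq_zero_collinear {a b c : ℝ × ℝ}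
    (h : (b.1 - a.1) * (c.2 - a.2) - (b.2 - a.2) * (c.1 - a.1) = 0) :
    Collinear ℝ ({a, b, c} : Set (ℝ × ℝ)) := by
  rw [collinear_iff_exists_forall_eq_smul_vadd]
  by_cases hba : b = a
  · refine ⟨a, c - a, fun p hp => ?_⟩
    simp only [Set.mem_insert_iff, Set.mem_singleton_iff] at hp
    rcases hp with rfl | rfl | rfl
    · exact ⟨0, by simp⟩
    · exact ⟨0, by simp [hba]⟩
    · exact ⟨1, by simp⟩
  · refine ⟨a, b - a, fun p hp => ?_⟩
    simp only [Set.mem_insert_iff, Set.mem_singleton_iff] at hp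
    rcases hp with rfl | rfl | rfl
    · exact ⟨0, by simp⟩
    · exact ⟨1, by simp⟩
    · -- here `p` is the third vertex (formerly `c`)
      by_cases h1 : b.1 = a.1
      · have h2 : b.2 ≠ a.2 := fun h2 => hba (Prod.ext h1 h2)
        refine ⟨(p.2 - a.2) / (b.2 - a.2), ?_⟩
        have hp1 : p.1 = a.1 := by
          rw [h1] at h
          have h' : (b.2 - a.2) * (p.1 - a.1) = 0 := by linarith
          rcases mul_eq_zero.mp h' with h'' | h''
          · exact absurd (by linarith) h2
          · linarith
        refine Prod.ext ?_ ?_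
        · simp [vadd_eq_add, Prod.fst_add, Prod.smul_fst, Prod.fst_sub, smul_eq_mul, h1, hp1]
        · have h2' : b.2 - a.2 ≠ 0 := sub_ne_zero.mpr h2
          simp only [vadd_eq_add, Prod.snd_add, Prod.smul_snd, Prod.snd_sub, smul_eq_mul]
          field_simp
          ring
      · refine ⟨(p.1 - a.1) / (b.1 - a.1), ?_⟩
        have h1' : b.1 - a.1 ≠ 0 := fun h' => h1 (by linarith)
        refine Prod.ext ?_ ?_
        · simp only [vadd_eq_add, Prod.fst_add, Prod.smul_fst, Prod.fst_sub, smul_eq_mul]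
          field_simp
          ring
        · simp only [vadd_eq_add, Prod.snd_add, Prod.smul_snd, Prod.snd_sub, smul_eq_mul]
          field_simp
          linear_combination h

/-- Let `A` and `B` be disjoint finite point sets with `A ∪ B` not collinear, and let `T` be
a non-degenerate triangle with vertices `a ∈ A`, `b ∈ B` and `c ∈ A ∪ B`. Then `a` or
`b` has a neighbour in the bivisibility graph `B(A,B)` lying in the closed triangle `T`
but not on the segment `ab`. -/
theorem bivisibility_triangle_neighbour
    (A B : Finset (ℝ × ℝ)) (hAB : Disjoint A B)
    (hncol : ¬ Collinear ℝ ((A ∪ B : Finset (ℝ × ℝ)) : Set (ℝ × ℝ)))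
    (a b c : ℝ × ℝ) (ha : a ∈ A) (hb : b ∈ B) (hc : c ∈ A ∪ B)
    (htri : ¬ Collinear ℝ ({a, b, c} : Set (ℝ × ℝ))) :
    ∃ p ∈ A ∪ B, p ∈ convexHull ℝ ({a, b, c} : Set (ℝ × ℝ)) ∧ p ∉ segment ℝ a b ∧
      (BivisAdj A B a p ∨ BivisAdj A B b p) := by
  classical
  set D : ℝ := (b.1 - a.1) * (c.2 - a.2) - (b.2 - a.2) * (c.1 - a.1) with hD
  have hD0 : D ≠ 0 := fun h => htri (cross_eq_zero_collinear h)
  set f : ℝ × ℝ → ℝ :=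
    fun x => ((b.1 - a.1) * (x.2 - a.2) - (b.2 - a.2) * (x.1 - a.1)) / D with hf
  have hfa : f a = 0 := by simp [hf]
  have hfb : f b = 0 := by
    rw [hf]
    have : (b.1 - a.1) * (b.2 - a.2) - (b.2 - a.2) * (b.1 - a.1) = 0 := by ring
    simp [this]
  have hfc : f c = 1 := by rw [hf]; field_simp; exact hD.symm
  have haff : ∀ (s t : ℝ) (x y : ℝ × ℝ), s + t = 1 →
      f (s • x + t • y) = s * f x + t * f y := by
    intro s t x y hst
    have hs : s = 1 - t := by linarith
    subst hs
    simp only [hf, Prod.fst_add, Prod.snd_add, Prod.smul_fst, Prod.smul_snd, smul_eq_mul]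
    ring
  have hseg0 : ∀ z ∈ segment ℝ a b, f z = 0 := by
    rintro z ⟨s, t, hs, ht, hst, rfl⟩
    rw [haff s t a b hst, hfa, hfb]; ring
  set T : Set (ℝ × ℝ) := convexHull ℝ ({a, b, c} : Set (ℝ × ℝ)) with hT
  have hTc : T = convexJoin ℝ {c} (segment ℝ a b) := by
    rw [hT, show ({a, b, c} : Set (ℝ × ℝ)) = insert c {a, b} by
        ext x; simp only [Set.mem_insert_iff, Set.mem_singleton_iff]; tauto,
      convexHull_insert ⟨a, by simp⟩, convexHull_pair]
  have hfT : ∀ x ∈ T, 0 ≤ f x ∧ f x ≤ 1 ∧ (f x = 0 → x ∈ segment ℝ a b) := by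
    intro x hx
    rw [hTc, convexJoin_singleton_left, Set.mem_iUnion₂] at hx
    obtain ⟨z, hz, s, t, hs, ht, hst, rfl⟩ := hx
    have hval : f (s • c + t • z) = s := by
      rw [haff s t c z hst, hfc, hseg0 z hz]; ring
    refine ⟨by rw [hval]; exact hs, by rw [hval]; linarith, fun h0 => ?_⟩
    rw [hval] at h0
    subst h0
    have ht1 : t = 1 := by linarith
    subst ht1
    simpa using hz
  have haT : a ∈ T := subset_convexHull ℝ _ (by simp)
  have hbT : b ∈ T := subset_convexHull ℝ _ (by simp)
  have hcT : c ∈ T := subset_convexHull ℝ _ (by simp)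
  have hconv : Convex ℝ T := convex_convexHull ℝ _
  set S : Finset (ℝ × ℝ) := (A ∪ B).filter (fun p => p ∈ T ∧ p ∉ segment ℝ a b) with hS
  have hcS : c ∈ S := by
    rw [hS, Finset.mem_filter]
    refine ⟨hc, hcT, fun h => ?_⟩
    have := hseg0 c h
    rw [hfc] at this
    norm_num at this
  obtain ⟨p, hpS, hpmin⟩ := S.exists_min_image f ⟨c, hcS⟩
  rw [hS, Finset.mem_filter] at hpS
  obtain ⟨hpAB, hpT, hpseg⟩ := hpS
  have hfp : 0 < f p := by
    obtain ⟨h0, h1, h2⟩ := hfT p hpT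
    rcases lt_or_eq_of_le h0 with h | h
    · exact h
    · exact absurd (h2 h.symm) hpseg
  have vis : ∀ e, e ∈ segment ℝ a b → ∀ q ∈ A ∪ B, q ∉ openSegment ℝ e p := by
    intro e he q hq hqo
    have heT : e ∈ T := hconv.segment_subset haT hbT he
    have hqT : q ∈ T := hconv.segment_subset heT hpT (openSegment_subset_segment ℝ e p hqo)
    obtain ⟨s, t, hs, ht, hst, hq'⟩ := hqo
    have hfq : f q = t * f p := by
      rw [← hq', haff s t e p hst, hseg0 e he]; ring
    have hq1 : f q < f p := by rw [hfq]; nlinarith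
    have hq0 : 0 < f q := by rw [hfq]; nlinarith
    have hqS : q ∈ S := by
      rw [hS, Finset.mem_filter]
      refine ⟨hq, hqT, fun hcon => ?_⟩
      have := hseg0 q hcon
      linarith
    have := hpmin q hqS
    linarith
  have hap : a ≠ p := fun h => hpseg (h ▸ left_mem_segment ℝ a b)
  have hbp : b ≠ p := fun h => hpseg (h ▸ right_mem_segment ℝ a b)
  refine ⟨p, hpAB, hpT, hpseg, ?_⟩
  rcases Finset.mem_union.mp hpAB with hpA | hpB
  · exact Or.inr ⟨hbp, Or.inr ⟨hb, hpA⟩, vis b (right_mem_segment ℝ a b)⟩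
  · exact Or.inl ⟨hap, Or.inl ⟨ha, hpB⟩, vis a (left_mem_segment ℝ a b)⟩
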